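/- Let κ > 0 and ν ∈ (0, 1), and let h₃(θ) = e^{κ cos θ} (1 + ν cos θ) / (2π (I₀(κ) + ν I₁(κ))) for θ ∈ [0, 2π). Then the first trigonometric moment of h₃ is real: ∫₀^{2π} sin θ · h₃(θ) dθ = 0 (so the mean direction is 0), and the mean resultant length satisfies ∫₀^{2π} cos θ · h₃(θ) dθ = ( ν I₀(κ) + 2 I₁(κ) + ν I₂(κ) ) / ( 2 ( I₀(κ) + ν I₁(κ) ) ). -/

import Mathlib

open Real

/-- The modified Bessel function of the first kind of integer order `p`,
defined by `I_p(κ) = (1/(2π)) ∫₀^{2π} e^{κ cos θ} cos(pθ) dθ`. -/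
noncomputable def besselI (p : ℤ) (κ : ℝ) : ℝ :=
  (1 / (2 * π)) * ∫ θ in (0:ℝ)..(2 * π), Real.exp (κ * Real.cos θ) * Real.cos (p * θ)

/-- The symmetric toroidal marginal density (location parameter `μ = 0`). -/
noncomputable def h₃ (κ ν : ℝ) (θ : ℝ) : ℝ :=
  Real.exp (κ * Real.cos θ) * (1 + ν * Real.cos θ)
    / (2 * π * (besselI 0 κ + ν * besselI 1 κ))

lemma hasDerivAt_S (κ : ℝ) (hκ : κ ≠ 0) (θ : ℝ) :
    HasDerivAt (fun t => -Real.exp (κ * Real.cos t) / κ)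
      (Real.sin θ * Real.exp (κ * Real.cos θ)) θ := by
  have h1 : HasDerivAt (fun t => κ * Real.cos t) (κ * (-Real.sin θ)) θ :=
    (Real.hasDerivAt_cos θ).const_mul κ
  have h3 := (h1.exp.neg).div_const κ
  refine h3.congr_deriv ?_
  field_simp

lemma hasDerivAt_SC (κ : ℝ) (hκ : κ ≠ 0) (θ : ℝ) :
    HasDerivAt (fun t => -(Real.exp (κ * Real.cos t) * (Real.cos t / κ - 1 / κ ^ 2)))
      (Real.sin θ * Real.cos θ * Real.exp (κ * Real.cos θ)) θ := by
  have h1 : HasDerivAt (fun t => κ * Real.cos t) (κ * (-Real.sin θ)) θ :=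
    (Real.hasDerivAt_cos θ).const_mul κ
  have h4 : HasDerivAt (fun t => Real.cos t / κ - 1 / κ ^ 2) (-Real.sin θ / κ) θ :=
    ((Real.hasDerivAt_cos θ).div_const κ).sub_const _
  have h5 := (h1.exp.mul h4).neg
  refine h5.congr_deriv ?_
  field_simp
  ring

lemma int_sinE (κ : ℝ) (hκ : κ ≠ 0) :
    ∫ θ in (0:ℝ)..(2 * π), Real.sin θ * Real.exp (κ * Real.cos θ) = 0 := by
  rw [intervalIntegral.integral_eq_sub_of_hasDerivAt (fun θ _ => hasDerivAt_S κ hκ θ)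
    (Continuous.intervalIntegrable (by fun_prop) _ _)]
  simp [Real.cos_two_pi]

lemma int_sinCosE (κ : ℝ) (hκ : κ ≠ 0) :
    ∫ θ in (0:ℝ)..(2 * π), Real.sin θ * Real.cos θ * Real.exp (κ * Real.cos θ) = 0 := by
  rw [intervalIntegral.integral_eq_sub_of_hasDerivAt (fun θ _ => hasDerivAt_SC κ hκ θ)
    (Continuous.intervalIntegrable (by fun_prop) _ _)]
  simp [Real.cos_two_pi]

lemma int_pE (κ : ℝ) (p : ℤ) :
    ∫ θ in (0:ℝ)..(2 * π), Real.exp (κ * Real.cos θ) * Real.cos ((p : ℝ) * θ)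
      = 2 * π * besselI p κ := by
  rw [besselI]
  field_simp

theorem stmt18 (κ ν : ℝ) (hκ : 0 < κ) (hν : ν ∈ Set.Ioo (0:ℝ) 1) :
    (∫ θ in (0:ℝ)..(2 * π), Real.sin θ * h₃ κ ν θ) = 0 ∧
    (∫ θ in (0:ℝ)..(2 * π), Real.cos θ * h₃ κ ν θ)
      = (ν * besselI 0 κ + 2 * besselI 1 κ + ν * besselI 2 κ)
          / (2 * (besselI 0 κ + ν * besselI 1 κ)) := by
  have hκ' : κ ≠ 0 := ne_of_gt hκ
  have h2π : (2 * π : ℝ) ≠ 0 := by positivity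
  set C : ℝ := 2 * π * (besselI 0 κ + ν * besselI 1 κ) with hC
  constructor
  · have key : (fun θ => Real.sin θ * h₃ κ ν θ)
        = fun θ => (Real.sin θ * Real.exp (κ * Real.cos θ)) / C
            + ν * ((Real.sin θ * Real.cos θ * Real.exp (κ * Real.cos θ)) / C) := by
      funext θ; simp only [h₃, hC]; ring
    rw [key, intervalIntegral.integral_add
        (Continuous.intervalIntegrable (by fun_prop) _ _)
        (Continuous.intervalIntegrable (by fun_prop) _ _),
      intervalIntegral.integral_const_mul, intervalIntegral.integral_div,
      intervalIntegral.integral_div, int_sinE κ hκ', int_sinCosE κ hκ']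
    simp
  · have key : (fun θ => Real.cos θ * h₃ κ ν θ)
        = fun θ => (Real.exp (κ * Real.cos θ) * Real.cos (((1:ℤ) : ℝ) * θ)) / C
            + (ν / 2) * ((Real.exp (κ * Real.cos θ) * Real.cos (((0:ℤ) : ℝ) * θ)) / C)
            + (ν / 2) * ((Real.exp (κ * Real.cos θ) * Real.cos (((2:ℤ) : ℝ) * θ)) / C) := by
      funext θ
      simp only [h₃, hC, Int.cast_zero, Int.cast_one, Int.cast_two, zero_mul, one_mul,
        Real.cos_zero, Real.cos_two_mul]
      ring
    rw [key, intervalIntegral.integral_add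
        (Continuous.intervalIntegrable (by fun_prop) _ _)
        (Continuous.intervalIntegrable (by fun_prop) _ _),
      intervalIntegral.integral_add
        (Continuous.intervalIntegrable (by fun_prop) _ _)
        (Continuous.intervalIntegrable (by fun_prop) _ _),
      intervalIntegral.integral_const_mul, intervalIntegral.integral_const_mul,
      intervalIntegral.integral_div, intervalIntegral.integral_div,
      intervalIntegral.integral_div, int_pE κ 1, int_pE κ 0, int_pE κ 2]
    have hcancel : ∀ x : ℝ, 2 * π * x / C = x / (besselI 0 κ + ν * besselI 1 κ) := by
      intro x
      rw [hC, mul_div_mul_left _ _ h2π]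
    rw [hcancel, hcancel, hcancel, ← div_div]
    set D : ℝ := besselI 0 κ + ν * besselI 1 κ
    rw [← mul_div_assoc, ← mul_div_assoc, ← add_div, ← add_div]
    congr 1
    ring
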